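/- Let A ∈ ℝ^{n^{d}×n^{d}} be a matrix regarded as an order-2d array via Kronecker-index rearrangement. If A^{[I]} is obtained from A by zeroing all entries whose index pairs (i_l, i_{l+d}) differ for some l ∈ I, then for any partition I₁,…,I_κ of [2d], ‖A^{[I]}‖_{I₁,…,I_κ} ≤ ‖A‖_{I₁,…,I_κ}. -/

import Mathlib

open Finset

/-- The partition norm `‖A‖_{I₁,…,I_κ}` of an array `A`, where the partition of the
axes `ι` into blocks `β` is encoded by the assignment map `c : ι → β`. -/
noncomputable def partitionNorm {ι : Type*} [Fintype ι] [DecidableEq ι] (n : ι → ℕ)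
    {β : Type*} [Fintype β] [DecidableEq β]
    (A : (∀ l, Fin (n l)) → ℝ) (c : ι → β) : ℝ :=
  sSup {r : ℝ | ∃ α : ∀ m : β, (∀ l : {x : ι // c x = m}, Fin (n l.1)) → ℝ,
    (∀ m, (∑ j, α m j ^ 2) = 1) ∧
      r = ∑ i, A i * ∏ m, α m fun l => i l.1}

section Aux

variable {ι : Type*} [Fintype ι] [DecidableEq ι] {n : ι → ℕ}
    {β : Type*} [Fintype β] [DecidableEq β]

lemma pn_bddAbove (A : (∀ l, Fin (n l)) → ℝ) (c : ι → β) :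
    BddAbove {r : ℝ | ∃ α : ∀ m : β, (∀ l : {x : ι // c x = m}, Fin (n l.1)) → ℝ,
      (∀ m, (∑ j, α m j ^ 2) = 1) ∧
        r = ∑ i, A i * ∏ m, α m fun l => i l.1} := by
  refine ⟨∑ i, |A i|, ?_⟩
  rintro r ⟨α, hα, rfl⟩
  have habs : ∀ m x, |α m x| ≤ 1 := by
    intro m x
    have h1 : α m x ^ 2 ≤ 1 := by
      rw [← hα m]
      exact Finset.single_le_sum (f := fun j => α m j ^ 2) (fun j _ => sq_nonneg _)
        (Finset.mem_univ x)
    nlinarith [abs_nonneg (α m x), sq_abs (α m x)]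
  calc ∑ i, A i * ∏ m, α m (fun l => i l.1)
      ≤ ∑ i, |A i * ∏ m, α m (fun l => i l.1)| :=
        Finset.sum_le_sum fun i _ => le_abs_self _
    _ ≤ ∑ i, |A i| := by
        refine Finset.sum_le_sum fun i _ => ?_
        rw [abs_mul]
        have h2 : |∏ m, α m (fun l => i l.1)| ≤ 1 := by
          rw [abs_prod]
          exact Finset.prod_le_one (fun m _ => abs_nonneg _) (fun m _ => habs m _)
        nlinarith [abs_nonneg (A i)]

lemma le_pn (A : (∀ l, Fin (n l)) → ℝ) (c : ι → β)
    (α : ∀ m : β, (∀ l : {x : ι // c x = m}, Fin (n l.1)) → ℝ)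
    (hα : ∀ m, (∑ j, α m j ^ 2) = 1) :
    (∑ i, A i * ∏ m, α m fun l => i l.1) ≤ partitionNorm n A c :=
  le_csSup (pn_bddAbove A c) ⟨α, hα, rfl⟩

lemma pn_nonneg [Nonempty β] (A : (∀ l, Fin (n l)) → ℝ) (c : ι → β) :
    0 ≤ partitionNorm n A c := by
  by_cases h : {r : ℝ | ∃ α : ∀ m : β, (∀ l : {x : ι // c x = m}, Fin (n l.1)) → ℝ,
      (∀ m, (∑ j, α m j ^ 2) = 1) ∧
        r = ∑ i, A i * ∏ m, α m fun l => i l.1}.Nonempty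
  · obtain ⟨r, α, hα, rfl⟩ := h
    have m₀ : β := Classical.arbitrary β
    set α' : ∀ m : β, (∀ l : {x : ι // c x = m}, Fin (n l.1)) → ℝ :=
      fun m x => (if m = m₀ then (-1 : ℝ) else 1) * α m x with hα'def
    have hα' : ∀ m, (∑ j, α' m j ^ 2) = 1 := by
      intro m
      rw [← hα m]
      refine Finset.sum_congr rfl fun j _ => ?_
      by_cases hm : m = m₀ <;> simp [hα'def, hm]
    have h1 := le_pn A c α hα
    have h2 := le_pn A c α' hα'
    have hneg : (∑ i, A i * ∏ m, α' m fun l => i l.1)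
        = -(∑ i, A i * ∏ m, α m fun l => i l.1) := by
      rw [← Finset.sum_neg_distrib]
      refine Finset.sum_congr rfl fun i _ => ?_
      have : (∏ m, α' m fun l => i l.1) = -(∏ m, α m fun l => i l.1) := by
        rw [hα'def]
        rw [Finset.prod_mul_distrib]
        rw [Finset.prod_ite_eq' Finset.univ m₀ (fun _ => (-1 : ℝ))]
        simp
      rw [this]; ring
    rw [hneg] at h2
    linarith
  · rw [Set.not_nonempty_iff_eq_empty] at h
    unfold partitionNorm
    rw [h, Real.sSup_empty]

end Aux

instance decEqFinSumElim {d : ℕ} (n : Fin d → ℕ) (i : ∀ a : Fin d ⊕ Fin d, Fin (Sum.elim n n a))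
    (l : Fin d) : Decidable (i (Sum.inl l) = i (Sum.inr l)) := instDecidableEqFin _ _ _

lemma core_diag (d : ℕ) (n : Fin d → ℕ)
    (B : (∀ a : Fin d ⊕ Fin d, Fin (Sum.elim n n a)) → ℝ) (l : Fin d)
    {β : Type*} [Fintype β] [DecidableEq β] (c : Fin d ⊕ Fin d → β) :
    partitionNorm (Sum.elim n n)
        (fun i => if i (Sum.inl l) = i (Sum.inr l) then B i else 0) c ≤
      partitionNorm (Sum.elim n n) B c := by
  have hne : Nonempty β := ⟨c (Sum.inl l)⟩
  conv_lhs => rw [partitionNorm]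
  refine Real.sSup_le ?_ (pn_nonneg B c)
  rintro r ⟨α, hα, rfl⟩
  set N := n l with hN
  set sgn : Bool → ℝ := fun b => if b then 1 else -1 with hsgn
  have sgn_sq : ∀ b, sgn b ^ 2 = 1 := by intro b; cases b <;> simp [hsgn]
  have sgn_mul : ∀ b, sgn b * sgn b = 1 := by intro b; cases b <;> simp [hsgn]
  have sgn_not : ∀ b, sgn (!b) = -sgn b := by intro b; cases b <;> simp [hsgn]
  set αε : (Fin N → Bool) → ∀ m : β,
      (∀ a : {x : Fin d ⊕ Fin d // c x = m}, Fin (Sum.elim n n a.1)) → ℝ :=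
    fun ε m x =>
      (if h : c (Sum.inl l) = m then sgn (ε (x ⟨Sum.inl l, h⟩)) else 1) *
      ((if h : c (Sum.inr l) = m then sgn (ε (x ⟨Sum.inr l, h⟩)) else 1) * α m x)
    with hαε
  have hαεnorm : ∀ ε m, (∑ j, αε ε m j ^ 2) = 1 := by
    intro ε m
    rw [← hα m]
    refine Finset.sum_congr rfl fun j _ => ?_
    by_cases h1 : c (Sum.inl l) = m <;> by_cases h2 : c (Sum.inr l) = m <;>
      simp [hαε, h1, h2, mul_pow, sgn_sq]
  have hprod : ∀ ε (i : ∀ a : Fin d ⊕ Fin d, Fin (Sum.elim n n a)),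
      (∏ m, αε ε m fun a => i a.1)
        = sgn (ε (i (Sum.inl l))) * (sgn (ε (i (Sum.inr l))) *
            ∏ m, α m fun a => i a.1) := by
    intro ε i
    rw [hαε]
    rw [Finset.prod_mul_distrib, Finset.prod_mul_distrib]
    congr 1
    · rw [Finset.prod_dite_eq]
      simp
    · congr 1
      rw [Finset.prod_dite_eq]
      simp
  have orth : ∀ a b : Fin N, (∑ ε : Fin N → Bool, sgn (ε a) * sgn (ε b))
      = if a = b then ((2 : ℝ) ^ N) else 0 := by
    intro a b
    by_cases hab : a = b
    · subst hab
      rw [if_pos rfl]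
      simp only [sgn_mul]
      simp [Finset.card_univ]
    · rw [if_neg hab]
      refine Finset.sum_involution (fun ε _ => Function.update ε a (!(ε a))) ?_ ?_ ?_ ?_
      · intro ε _
        show sgn (ε a) * sgn (ε b) +
          sgn (Function.update ε a (!(ε a)) a) * sgn (Function.update ε a (!(ε a)) b) = 0
        rw [Function.update_self, Function.update_of_ne (fun h => hab (h.symm)), sgn_not]
        ring
      · intro ε _ hf hcontra
        have := congrFun hcontra a
        simp [Function.update_self] at this
      · intro ε _; exact Finset.mem_univ _
      · intro ε _
        simp [Function.update_idem, Function.update_self, Bool.not_not,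
          Function.update_eq_self]
  have h2N : ((2 : ℝ) ^ N) ≠ 0 := by positivity
  have hsum : ∀ i : ∀ a : Fin d ⊕ Fin d, Fin (Sum.elim n n a),
      (if i (Sum.inl l) = i (Sum.inr l) then B i else 0) * (∏ m, α m fun a => i a.1)
        = ((2 : ℝ) ^ N)⁻¹ * ∑ ε : Fin N → Bool, B i * ∏ m, αε ε m fun a => i a.1 := by
    intro i
    have hstep : (∑ ε : Fin N → Bool, B i * ∏ m, αε ε m fun a => i a.1)
        = (if i (Sum.inl l) = i (Sum.inr l) then ((2 : ℝ) ^ N) else 0) *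
            (B i * ∏ m, α m fun a => i a.1) := by
      calc (∑ ε : Fin N → Bool, B i * ∏ m, αε ε m fun a => i a.1)
          = ∑ ε : Fin N → Bool, (sgn (ε (i (Sum.inl l))) * sgn (ε (i (Sum.inr l)))) *
              (B i * ∏ m, α m fun a => i a.1) := by
            refine Finset.sum_congr rfl fun ε _ => ?_
            rw [hprod]; ring
        _ = (∑ ε : Fin N → Bool, sgn (ε (i (Sum.inl l))) * sgn (ε (i (Sum.inr l)))) *
              (B i * ∏ m, α m fun a => i a.1) := by rw [← Finset.sum_mul]
        _ = _ := by rw [orth (i (Sum.inl l)) (i (Sum.inr l))]; exact rfl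
    rw [hstep]
    by_cases hi : i (Sum.inl l) = i (Sum.inr l)
    · rw [if_pos hi, if_pos hi, ← mul_assoc, ← mul_assoc, inv_mul_cancel₀ h2N]
      ring
    · rw [if_neg hi, if_neg hi]
      ring
  calc (∑ i, (if i (Sum.inl l) = i (Sum.inr l) then B i else 0) *
          ∏ m, α m fun a => i a.1)
      = ((2 : ℝ) ^ N)⁻¹ * ∑ i, ∑ ε : Fin N → Bool, B i * ∏ m, αε ε m fun a => i a.1 := by
        rw [Finset.mul_sum]
        exact Finset.sum_congr rfl fun i _ => hsum i
    _ = ((2 : ℝ) ^ N)⁻¹ * ∑ ε : Fin N → Bool, ∑ i, B i * ∏ m, αε ε m fun a => i a.1 := by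
        rw [Finset.sum_comm]
    _ ≤ ((2 : ℝ) ^ N)⁻¹ * ∑ ε : Fin N → Bool, partitionNorm (Sum.elim n n) B c := by
        refine mul_le_mul_of_nonneg_left ?_ (by positivity)
        exact Finset.sum_le_sum fun ε _ => le_pn B c (αε ε) (hαεnorm ε)
    _ = partitionNorm (Sum.elim n n) B c := by
        rw [Finset.sum_const, Finset.card_univ]
        simp only [Fintype.card_fun, Fintype.card_bool, Fintype.card_fin, nsmul_eq_mul]
        rw [← mul_assoc]
        rw [show ((2 : ℝ) ^ N)⁻¹ * ((2 ^ N : ℕ) : ℝ) = 1 by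
          push_cast; rw [inv_mul_cancel₀ h2N]]
        ring

/-- Restricting an order-`2d` array to the diagonal on the axis pairs `(l, l+d)` for
`l ∈ S` (zeroing all other entries) does not increase any partition norm. -/
theorem diagonal_restriction_norm (d : ℕ) (n : Fin d → ℕ)
    (A : (∀ l : Fin d ⊕ Fin d, Fin (Sum.elim n n l)) → ℝ) (S : Finset (Fin d))
    {β : Type*} [Fintype β] [DecidableEq β] (c : Fin d ⊕ Fin d → β) :
    partitionNorm (Sum.elim n n)
        (fun i => haveI : ∀ l : Fin d, Decidable (i (Sum.inl l) = i (Sum.inr l)) :=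
          fun l => instDecidableEqFin _ _ _
          if ∀ l ∈ S, i (Sum.inl l) = i (Sum.inr l) then A i else 0) c ≤
      partitionNorm (Sum.elim n n) A c := by
  induction S using Finset.induction_on with
  | empty => simp
  | @insert a s ha ih =>
    have hrw : (fun i : ∀ l : Fin d ⊕ Fin d, Fin (Sum.elim n n l) =>
        if ∀ l ∈ insert a s, i (Sum.inl l) = i (Sum.inr l) then A i else 0)
      = fun i => if i (Sum.inl a) = i (Sum.inr a) then
          (if ∀ l ∈ s, i (Sum.inl l) = i (Sum.inr l) then A i else 0) else 0 := by
      funext i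
      by_cases h1 : i (Sum.inl a) = i (Sum.inr a) <;>
        by_cases h2 : ∀ l ∈ s, i (Sum.inl l) = i (Sum.inr l) <;>
        split_ifs <;> simp only [Finset.forall_mem_insert] at * <;> tauto
    rw [hrw]
    exact le_trans (core_diag d n _ a c) ih
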